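/- Let θ be the Lane–Emden function of index ν (1 < ν < 5), positive on [0, ξ₁), with θ(0)=1, θ'(0)=0, satisfying −r²θ'(r) = ∫₀^r θ^ν s² ds. Then for r₁ ∈ (0, ξ₁) with θ'(r₁) r₁² = −(2/(ν−1)) θ(r₁) r₁, the following identity holds: ∫₀^{r₁} (1/(θ(r)² r²)) (∫₀^r θ(s)^ν s² ds)² dr = (2/(ν−1)) r₁ − ∫₀^{r₁} r² θ(r)^{ν−1} dr. -/

import Mathlib

open Set intervalIntegral MeasureTheory

theorem stmt_8 (ν ξ₁ : ℝ) (hν : 1 < ν) (hν5 : ν < 5) (hξ : 0 < ξ₁)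
    (θ : ℝ → ℝ) (hC2 : ContDiffOn ℝ 2 θ (Set.Icc 0 ξ₁))
    (hode : ∀ r ∈ Set.Ioo 0 ξ₁,
      deriv (deriv θ) r + (2 / r) * deriv θ r + θ r ^ ν = 0)
    (h0 : θ 0 = 1) (h0' : deriv θ 0 = 0)
    (hpos : ∀ r ∈ Set.Ico 0 ξ₁, 0 < θ r)
    (hint : ∀ r ∈ Set.Ioo 0 ξ₁,
      -r ^ 2 * deriv θ r = ∫ s in (0:ℝ)..r, θ s ^ ν * s ^ 2)
    (r₁ : ℝ) (hr₁ : r₁ ∈ Set.Ioo 0 ξ₁)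
    (hcrit : deriv θ r₁ * r₁ ^ 2 = -(2 / (ν - 1)) * θ r₁ * r₁) :
    (∫ r in (0:ℝ)..r₁,
        (1 / (θ r ^ 2 * r ^ 2)) * (∫ s in (0:ℝ)..r, θ s ^ ν * s ^ 2) ^ 2) =
      (2 / (ν - 1)) * r₁ - ∫ r in (0:ℝ)..r₁, r ^ 2 * θ r ^ (ν - 1) := by
  obtain ⟨hr0, hrξ⟩ := hr₁
  set f : ℝ → ℝ := fun s => θ s ^ ν * s ^ 2 with hfdef
  set g : ℝ → ℝ := fun r => ∫ s in (0:ℝ)..r, f s with hgdef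
  have hθc : ContinuousOn θ (Set.Icc 0 ξ₁) := hC2.continuousOn
  have hsub : Set.Icc 0 r₁ ⊆ Set.Icc 0 ξ₁ := Set.Icc_subset_Icc le_rfl hrξ.le
  have hθpos : ∀ r ∈ Set.Icc 0 r₁, 0 < θ r :=
    fun r hr => hpos r ⟨hr.1, lt_of_le_of_lt hr.2 hrξ⟩
  have hfc : ContinuousOn f (Set.Icc 0 ξ₁) :=
    (hθc.rpow_const fun x _ => Or.inr (by linarith)).mul (continuous_pow 2).continuousOn
  have hg0 : g 0 = 0 := intervalIntegral.integral_same
  -- continuity of g on [0, r₁]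
  have hg_cont : ContinuousOn g (Set.Icc 0 r₁) := by
    have : ContinuousOn g (Set.uIcc 0 r₁) := by
      apply intervalIntegral.continuousOn_primitive_interval
      rw [Set.uIcc_of_le hr0.le]
      exact (hfc.mono hsub).integrableOn_Icc
    rwa [Set.uIcc_of_le hr0.le] at this
  -- derivative of g at interior points
  have hg_deriv : ∀ r ∈ Set.Ioo 0 ξ₁, HasDerivAt g (f r) r := by
    intro r hr
    apply intervalIntegral.integral_hasDerivAt_right
    · exact (hfc.mono (Set.Icc_subset_Icc le_rfl hr.2.le)).intervalIntegrable_of_Icc hr.1.le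
    · exact (ContinuousOn.stronglyMeasurableAtFilter isOpen_Ioo
        (hfc.mono Set.Ioo_subset_Icc_self) r hr)
    · exact (hfc.mono Set.Ioo_subset_Icc_self).continuousAt (isOpen_Ioo.mem_nhds hr)
  -- right derivative of g at 0 is 0
  have hg_right : HasDerivWithinAt g 0 (Set.Ici 0) 0 := by
    have hf0 : f 0 = 0 := by simp [hfdef]
    have hIccmem : Set.Icc 0 ξ₁ ∈ nhdsWithin (0:ℝ) (Set.Ioi 0) := by
      apply mem_nhdsWithin.2 ⟨Set.Iio ξ₁, isOpen_Iio, hξ, ?_⟩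
      rintro x ⟨h1, h2⟩; exact ⟨le_of_lt h2, le_of_lt h1⟩
    have hcw : ContinuousWithinAt f (Set.Ioi 0) 0 :=
      (hfc.continuousWithinAt ⟨le_rfl, hξ.le⟩).mono_of_mem_nhdsWithin hIccmem
    have := intervalIntegral.integral_hasDerivWithinAt_right
      (f := f) (a := (0:ℝ)) (b := (0:ℝ)) (s := Set.Ici 0) (t := Set.Ioi 0)
      IntervalIntegrable.refl
      ⟨Set.Icc 0 ξ₁, hIccmem, hfc.aestronglyMeasurable measurableSet_Icc⟩
      hcw
    rwa [hf0] at this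
  -- continuity of r ↦ g r / r on [0, r₁]
  have hq_cont : ContinuousOn (fun r => g r / r) (Set.Icc 0 r₁) := by
    intro x hx
    rcases eq_or_lt_of_le hx.1 with h | h
    · subst h
      have hslope : Filter.Tendsto (slope g 0) (nhdsWithin 0 (Set.Ici 0 \ {0})) (nhds 0) :=
        hasDerivWithinAt_iff_tendsto_slope.1 hg_right
      have hset : Set.Ici (0:ℝ) \ {0} = Set.Ioi 0 := by
        ext y; simp [lt_iff_le_and_ne, eq_comm, and_comm]
      have hslope' : Filter.Tendsto (fun r => g r / r) (nhdsWithin 0 (Set.Ioi 0)) (nhds 0) := by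
        rw [← hset]
        refine hslope.congr' ?_
        filter_upwards [self_mem_nhdsWithin] with y hy
        simp [slope_def_field, hg0, div_eq_div_iff]
      have : Filter.Tendsto (fun r => g r / r) (nhdsWithin 0 (Set.Ici 0)) (nhds 0) := by
        rw [← Set.Ioi_insert, nhdsWithin_insert]
        rw [Filter.tendsto_sup]
        constructor
        · have hp := tendsto_pure_nhds (fun r => g r / r) (0:ℝ)
          simp only [hg0, zero_div] at hp
          exact hp
        · exact hslope'
      have : Filter.Tendsto (fun r => g r / r) (nhdsWithin 0 (Set.Icc 0 r₁)) (nhds 0) :=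
        this.mono_left (nhdsWithin_mono _ Set.Icc_subset_Ici_self)
      simpa [ContinuousWithinAt, hg0] using this
    · exact (hg_cont x hx).div continuousWithinAt_id (ne_of_gt h)
  have hθ_contOn : ContinuousOn θ (Set.Icc 0 r₁) := hθc.mono hsub
  -- the two pieces of φ
  set ψ : ℝ → ℝ := fun r => r ^ 2 * θ r ^ (ν - 1) with hψdef
  set u : ℝ → ℝ := fun r => (g r / r) ^ 2 / θ r ^ 2 with hudef
  have hψ_cont : ContinuousOn ψ (Set.Icc 0 r₁) :=
    (continuous_pow 2).continuousOn.mul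
      (hθ_contOn.rpow_const fun x _ => Or.inr (by linarith))
  have hu_cont : ContinuousOn u (Set.Icc 0 r₁) :=
    (hq_cont.pow 2).div (hθ_contOn.pow 2)
      (fun x hx => pow_ne_zero 2 (hθpos x hx).ne')
  have hψ_int : IntervalIntegrable ψ volume 0 r₁ := by
    apply ContinuousOn.intervalIntegrable; rwa [Set.uIcc_of_le hr0.le]
  have hu_int : IntervalIntegrable u volume 0 r₁ := by
    apply ContinuousOn.intervalIntegrable; rwa [Set.uIcc_of_le hr0.le]
  set G : ℝ → ℝ := fun r => g r / θ r with hGdef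
  have hG_cont : ContinuousOn G (Set.Icc 0 r₁) :=
    hg_cont.div hθ_contOn (fun x hx => (hθpos x hx).ne')
  have hG_deriv : ∀ r ∈ Set.Ioo 0 r₁, HasDerivAt G (u r + ψ r) r := by
    intro r hr
    have hrξ' : r ∈ Set.Ioo 0 ξ₁ := ⟨hr.1, hr.2.trans hrξ⟩
    have ht : 0 < θ r := hθpos r ⟨hr.1.le, hr.2.le⟩
    have ht' : θ r ≠ 0 := ht.ne'
    have hrne : r ≠ 0 := hr.1.ne'
    have hθd : HasDerivAt θ (deriv θ r) r :=
      ((hC2.differentiableOn (by norm_num)).differentiableAt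
        (Icc_mem_nhds hrξ'.1 hrξ'.2)).hasDerivAt
    have hgd := hg_deriv r hrξ'
    have hgr : g r = -r ^ 2 * deriv θ r := (hint r hrξ').symm
    have hder := hgd.div hθd ht'
    refine hder.congr_deriv (Eq.symm ?_)
    have key : θ r ^ (ν - 1) * θ r ^ (2:ℕ) = θ r ^ ν * θ r := by
      rw [← Real.rpow_natCast (θ r) 2, ← Real.rpow_add ht,
        show ν - 1 + (2:ℕ) = ν + 1 by push_cast; ring, Real.rpow_add ht, Real.rpow_one]
    have e1 : (g r / r) ^ 2 = r ^ 2 * deriv θ r ^ 2 := by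
      rw [hgr]; field_simp
    show (g r / r) ^ 2 / θ r ^ 2 + r ^ 2 * θ r ^ (ν - 1) =
      (f r * θ r - g r * deriv θ r) / θ r ^ 2
    rw [e1, hgr]
    show r ^ 2 * deriv θ r ^ 2 / θ r ^ 2 + r ^ 2 * θ r ^ (ν - 1) =
      (θ r ^ ν * r ^ 2 * θ r - -r ^ 2 * deriv θ r * deriv θ r) / θ r ^ 2
    field_simp
    linear_combination key
  -- FTC
  have hφ_int : IntervalIntegrable (fun r => u r + ψ r) volume 0 r₁ := hu_int.add hψ_int
  have hFTC : ∫ r in (0:ℝ)..r₁, (u r + ψ r) = G r₁ - G 0 :=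
    intervalIntegral.integral_eq_sub_of_hasDerivAt_of_le hr0.le hG_cont
      (fun x hx => hG_deriv x hx) hφ_int
  have hG0 : G 0 = 0 := by simp [hGdef, hg0]
  have hGr₁ : G r₁ = 2 / (ν - 1) * r₁ := by
    have hgr : g r₁ = -r₁ ^ 2 * deriv θ r₁ := (hint r₁ ⟨hr0, hrξ⟩).symm
    have ht' : θ r₁ ≠ 0 := (hθpos r₁ ⟨hr0.le, le_rfl⟩).ne'
    have hν1 : ν - 1 ≠ 0 := sub_ne_zero.mpr hν.ne'
    have hg1 : g r₁ = 2 / (ν - 1) * θ r₁ * r₁ := by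
      rw [hgr]; linear_combination -hcrit
    show g r₁ / θ r₁ = 2 / (ν - 1) * r₁
    rw [hg1]
    field_simp
  have hsplit : ∫ r in (0:ℝ)..r₁, (u r + ψ r) =
      (∫ r in (0:ℝ)..r₁, u r) + ∫ r in (0:ℝ)..r₁, ψ r :=
    intervalIntegral.integral_add hu_int hψ_int
  have hcongr : (∫ r in (0:ℝ)..r₁,
      (1 / (θ r ^ 2 * r ^ 2)) * (∫ s in (0:ℝ)..r, θ s ^ ν * s ^ 2) ^ 2) =
      ∫ r in (0:ℝ)..r₁, u r := by
    apply intervalIntegral.integral_congr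
    intro x hx
    rw [Set.uIcc_of_le hr0.le] at hx
    have ht' : θ x ≠ 0 := (hθpos x hx).ne'
    rcases eq_or_ne x 0 with h | h
    · subst h
      simp [hudef, hg0, hgdef, hfdef]
    · rw [hudef]
      show 1 / (θ x ^ 2 * x ^ 2) * (g x) ^ 2 = (g x / x) ^ 2 / θ x ^ 2
      field_simp
      try ring
      try tauto
  rw [hcongr]
  have : (∫ r in (0:ℝ)..r₁, u r) = (G r₁ - G 0) - ∫ r in (0:ℝ)..r₁, ψ r := by
    rw [← hFTC, hsplit]; ring
  rw [this, hG0, hGr₁]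
  ring_nf
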